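/- A 2-hybrid network is 1-nested if and only if it is a weakly galled tree: in a rooted DAG whose hybrid nodes all have in-degree 2, no node is intermediate in reticulation cycles for two different hybrid nodes if and only if every pair of distinct reticulation cycles have disjoint arc sets. -/

import Mathlib

/-- An evolutionary network: a rooted directed acyclic graph. -/
structure EvoNet (V : Type*) where
  arc : V → V → Prop
  root : V
  acyclic : ∀ v : V, ¬ Relation.TransGen arc v v
  rooted : ∀ v : V, Relation.ReflTransGen arc root v

namespace EvoNet

variable {V : Type*}

/-- A hybrid node: in-degree at least 2. -/
def IsHybrid (N : EvoNet V) (v : V) : Prop :=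
  ∃ u w : V, u ≠ w ∧ N.arc u v ∧ N.arc w v

/-- A tree node: in-degree at most 1. -/
def IsTreeNode (N : EvoNet V) (v : V) : Prop := ¬ N.IsHybrid v

/-- A (directed) path, given as its nonempty list of nodes. -/
def IsPath (N : EvoNet V) (p : List V) : Prop := p ≠ [] ∧ p.Chain' N.arc

/-- The intermediate (non-endpoint) nodes of a path. -/
def interm (p : List V) : Set V := {x | x ∈ (p.drop 1).dropLast}

/-- A reticulation cycle for the hybrid node `hend`: a pair of internally
disjoint nontrivial paths with the same origin (the split node), both ending
in `hend`. -/
structure RetCycle (N : EvoNet V) where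
  hend : V
  p : List V
  q : List V
  isPath_p : N.IsPath p
  isPath_q : N.IsPath q
  len_p : 2 ≤ p.length
  len_q : 2 ≤ q.length
  same_origin : p.head? = q.head?
  last_p : p.getLast? = some hend
  last_q : q.getLast? = some hend
  hybrid : N.IsHybrid hend
  intDisjoint : ∀ x : V, x ∈ interm p → x ∉ interm q
  ne : p ≠ q

/-- The nodes of a reticulation cycle. -/
def RetCycle.nodes {N : EvoNet V} (c : RetCycle N) : Set V :=
  {x | x ∈ c.p ∨ x ∈ c.q}

/-- The arcs of a reticulation cycle. -/
def RetCycle.arcs {N : EvoNet V} (c : RetCycle N) : Set (V × V) :=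
  {e | e ∈ c.p.zip c.p.tail ∨ e ∈ c.q.zip c.q.tail}

/-- The intermediate nodes of a reticulation cycle. -/
def RetCycle.intermNodes {N : EvoNet V} (c : RetCycle N) : Set V :=
  interm c.p ∪ interm c.q

/-- `s` is the split node of the reticulation cycle `c`. -/
def RetCycle.SplitIs {N : EvoNet V} (c : RetCycle N) (s : V) : Prop :=
  c.p.head? = some s

/-- Two reticulation cycles are the same (as unordered pairs of merge paths). -/
def RetCycle.Equiv {N : EvoNet V} (c₁ c₂ : RetCycle N) : Prop :=
  (c₁.p = c₂.p ∧ c₁.q = c₂.q) ∨ (c₁.p = c₂.q ∧ c₁.q = c₂.p)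

/-- 1-nested: no node is intermediate in reticulation cycles for two
different hybrid nodes. -/
def OneNested (N : EvoNet V) : Prop :=
  ∀ c₁ c₂ : RetCycle N, c₁.hend ≠ c₂.hend →
    ∀ x : V, x ∈ c₁.intermNodes → x ∉ c₂.intermNodes

/-- Galled tree: distinct reticulation cycles have disjoint node sets. -/
def Galled (N : EvoNet V) : Prop :=
  ∀ c₁ c₂ : RetCycle N, ¬ c₁.Equiv c₂ → Disjoint c₁.nodes c₂.nodes

/-- Weakly galled tree: distinct reticulation cycles have disjoint arc sets. -/
def WeaklyGalled (N : EvoNet V) : Prop :=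
  ∀ c₁ c₂ : RetCycle N, ¬ c₁.Equiv c₂ → Disjoint c₁.arcs c₂.arcs

/-- 2-hybrid: every hybrid node has in-degree exactly 2. -/
def TwoHybrid (N : EvoNet V) : Prop :=
  ∀ v : V, N.IsHybrid v →
    ∃ u w : V, u ≠ w ∧ N.arc u v ∧ N.arc w v ∧ ∀ z : V, N.arc z v → z = u ∨ z = w

/-- Hybrid-1: every hybrid node has out-degree exactly 1. -/
def HybridOne (N : EvoNet V) : Prop :=
  ∀ v : V, N.IsHybrid v → ∃! w : V, N.arc v w

/-- Semibinary: hybrid nodes have in-degree 2 and out-degree 1. -/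
def Semibinary (N : EvoNet V) : Prop := N.TwoHybrid ∧ N.HybridOne

/-- Node of out-degree exactly 2. -/
def OutDegTwo (N : EvoNet V) (v : V) : Prop :=
  ∃ u w : V, u ≠ w ∧ N.arc v u ∧ N.arc v w ∧ ∀ z : V, N.arc v z → z = u ∨ z = w

/-- An internal (non-leaf) node. -/
def IsInternal (N : EvoNet V) (v : V) : Prop := ∃ w : V, N.arc v w

/-- Binary (fully resolved): semibinary and internal tree nodes have
out-degree 2. -/
def Binary (N : EvoNet V) : Prop :=
  N.Semibinary ∧ ∀ v : V, N.IsTreeNode v → N.IsInternal v → N.OutDegTwo v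

/-- Undirected adjacency induced by a set of arcs. -/
def uadj (A : Set (V × V)) (x y : V) : Prop := (x, y) ∈ A ∨ (y, x) ∈ A

/-- The vertices of a subgraph given by a set of arcs. -/
def everts (A : Set (V × V)) : Set V := {x | ∃ y : V, (x, y) ∈ A ∨ (y, x) ∈ A}

/-- Connectedness of the underlying undirected graph of a set of arcs. -/
def EConnected (A : Set (V × V)) : Prop :=
  ∀ x y : V, x ∈ everts A → y ∈ everts A → Relation.ReflTransGen (uadj A) x y

/-- Remove a node and all arcs incident to it. -/
def avoid (A : Set (V × V)) (v : V) : Set (V × V) :=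
  {e ∈ A | e.1 ≠ v ∧ e.2 ≠ v}

/-- A biconnected subgraph of a network: a set of arcs of the network whose
underlying undirected graph is connected and remains connected after the
removal of any single node (with all arcs incident to it). -/
def Biconnected (N : EvoNet V) (A : Set (V × V)) : Prop :=
  (∀ e ∈ A, N.arc e.1 e.2) ∧ EConnected A ∧ ∀ v : V, EConnected (avoid A v)

/-- Level-1: no biconnected subgraph contains more than one hybrid node. -/
def LevelOne (N : EvoNet V) : Prop :=
  ∀ A : Set (V × V), N.Biconnected A →
    ∀ h₁ h₂ : V, N.IsHybrid h₁ → N.IsHybrid h₂ →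
      h₁ ∈ everts A → h₂ ∈ everts A → h₁ = h₂

/-- `v` is a descendant of `u`. -/
def Desc (N : EvoNet V) (u v : V) : Prop := Relation.ReflTransGen N.arc u v

/-- `v` is a proper descendant of `u`. -/
def ProperDesc (N : EvoNet V) (u v : V) : Prop := Relation.TransGen N.arc u v

/-- `w` is a minimal common ancestor of `u` and `v`: a common ancestor that is
a proper ancestor of no other common ancestor of them. -/
def IsMCA (N : EvoNet V) (w u v : V) : Prop :=
  N.Desc w u ∧ N.Desc w v ∧
    ∀ z : V, N.Desc z u → N.Desc z v → ¬ N.ProperDesc w z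

end EvoNet
namespace EvoNet

open Relation List

variable {V : Type*} {arc : V → V → Prop}

lemma rtg_ne_tg {x y : V} (h : Relation.ReflTransGen arc x y) (hne : x ≠ y) :
    Relation.TransGen arc x y := by
  rcases Relation.reflTransGen_iff_eq_or_transGen.mp h with h | h
  · exact absurd h.symm hne
  · exact h

lemma no_rt_tr (hA : ∀ v : V, ¬ Relation.TransGen arc v v) {x y : V}
    (h1 : Relation.ReflTransGen arc x y) (h2 : Relation.TransGen arc y x) : False :=
  hA x (Relation.TransGen.trans_right h1 h2)

lemma no_tr_rt (hA : ∀ v : V, ¬ Relation.TransGen arc v v) {x y : V}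
    (h1 : Relation.TransGen arc x y) (h2 : Relation.ReflTransGen arc y x) : False :=
  hA x (Relation.TransGen.trans_left h1 h2)

lemma arc_ne (hA : ∀ v : V, ¬ Relation.TransGen arc v v) {x y : V} (h : arc x y) : x ≠ y := by
  rintro rfl; exact hA x (Relation.TransGen.single h)

lemma chain'_cons_trans : ∀ {l : List V} {x y : V}, List.Chain' arc (x :: l) → y ∈ l →
    Relation.TransGen arc x y := by
  intro l
  induction l with
  | nil => simp
  | cons a t ih =>
    intro x y hc hy
    have hxa : arc x a := (List.isChain_cons_cons.mp hc).1
    rcases List.mem_cons.mp hy with rfl | hy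
    · exact Relation.TransGen.single hxa
    · exact Relation.TransGen.head hxa (ih (List.isChain_cons_cons.mp hc).2 hy)

lemma chain'_nodup (hA : ∀ v : V, ¬ Relation.TransGen arc v v) :
    ∀ {l : List V}, List.Chain' arc l → l.Nodup := by
  intro l
  induction l with
  | nil => simp
  | cons a t ih =>
    intro hc
    refine List.nodup_cons.mpr ⟨fun hmem => ?_, ih hc.tail⟩
    exact hA a (chain'_cons_trans hc hmem)

lemma interm_iff {l : List V} (hn : l.Nodup) {x : V} :
    x ∈ interm l ↔ x ∈ l ∧ l.head? ≠ some x ∧ l.getLast? ≠ some x := by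
  cases l with
  | nil => simp [interm]
  | cons a t =>
    rcases t.eq_nil_or_concat' with rfl | ⟨t₀, z, rfl⟩
    · simp only [interm, List.drop_one, List.tail_cons, List.dropLast_nil, Set.mem_setOf_eq,
        List.not_mem_nil, false_iff, not_and]
      intro h
      rcases List.mem_singleton.mp h with rfl
      simp
    · have hnd : a ∉ t₀ ++ [z] ∧ (t₀ ++ [z]).Nodup := List.nodup_cons.mp hn
      have hdisj : t₀.Disjoint [z] := (List.nodup_append'.mp hnd.2).2.2
      have hint : x ∈ interm (a :: (t₀ ++ [z])) ↔ x ∈ t₀ := by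
        simp [interm]
      rw [hint]
      constructor
      · intro hx'
        refine ⟨by simp [hx'], ?_, ?_⟩
        · simp only [List.head?_cons, ne_eq, Option.some.injEq]
          rintro rfl
          exact hnd.1 (List.mem_append_left _ hx')
        · rw [show a :: (t₀ ++ [z]) = (a :: t₀) ++ [z] by simp, List.getLast?_concat]
          simp only [ne_eq, Option.some.injEq]
          rintro rfl
          exact hdisj hx' (by simp)
      · rintro ⟨hmem, hhd, hlast⟩
        simp only [List.head?_cons, ne_eq, Option.some.injEq] at hhd
        rw [show a :: (t₀ ++ [z]) = (a :: t₀) ++ [z] by simp, List.getLast?_concat] at hlast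
        simp only [ne_eq, Option.some.injEq] at hlast
        rcases List.mem_cons.mp hmem with rfl | h
        · exact absurd rfl hhd
        · rcases List.mem_append.mp h with h | h
          · exact h
          · rcases List.mem_singleton.mp h with rfl
            exact absurd rfl hlast

lemma zip_tail_iff : ∀ {l : List V} {u v : V},
    (u, v) ∈ l.zip l.tail ↔ ∃ l₁ l₂, l = l₁ ++ u :: v :: l₂ := by
  intro l
  induction l with
  | nil => simp
  | cons a t ih =>
    intro u v
    cases t with
    | nil =>
      simp only [List.tail_cons, List.zip_nil_right, List.not_mem_nil, false_iff, not_exists]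
      intro l₁ l₂ heq
      rcases l₁ with _ | ⟨c, l₁'⟩ <;> simp_all
    | cons b t' =>
      constructor
      · intro h
        rcases List.mem_cons.mp h with h | h
        · obtain ⟨rfl, rfl⟩ : u = a ∧ v = b := by simpa using h
          exact ⟨[], t', rfl⟩
        · obtain ⟨l₁, l₂, heq⟩ := ih.mp h
          exact ⟨a :: l₁, l₂, by simp [heq]⟩
      · rintro ⟨l₁, l₂, heq⟩
        cases l₁ with
        | nil =>
          simp only [List.nil_append, List.cons.injEq] at heq
          obtain ⟨rfl, rfl, rfl⟩ := heq
          exact List.mem_cons_self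
        | cons c l₁' =>
          simp only [List.cons_append, List.cons.injEq] at heq
          obtain ⟨rfl, heq⟩ := heq
          exact List.mem_cons_of_mem _ (ih.mpr ⟨l₁', l₂, heq⟩)

lemma arc_of_zip {l : List V} (hc : List.Chain' arc l) {u v : V}
    (h : (u, v) ∈ l.zip l.tail) : arc u v := by
  obtain ⟨l₁, l₂, rfl⟩ := zip_tail_iff.mp h
  have := hc.suffix ⟨l₁, rfl⟩
  exact (List.isChain_cons_cons.mp this).1

lemma zip_of_concat2 {l l₀ : List V} {a h : V} (heq : l = l₀ ++ [a, h]) :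
    (a, h) ∈ l.zip l.tail :=
  zip_tail_iff.mpr ⟨l₀, [], heq⟩

/-- A walk from `x` to `y`: a nonempty chain list with given head and last. -/
structure W (arc : V → V → Prop) (x y : V) : Type _ where
  l : List V
  ne : l ≠ []
  ch : l.Chain' arc
  hd : l.head? = some x
  lst : l.getLast? = some y

namespace W

variable {x y z c : V}

lemma headMem (w : W arc x y) : x ∈ w.l := List.mem_of_mem_head? (by rw [w.hd]; rfl)

lemma lastMem (w : W arc x y) : y ∈ w.l := by
  have h := w.ne
  have h2 := List.getLast?_eq_getLast_of_ne_nil h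
  rw [w.lst] at h2
  have hx : y = w.l.getLast h := by injection h2
  have h3 := List.getLast_mem h
  rwa [← hx] at h3

lemma cons_form (w : W arc x y) : w.l = x :: w.l.tail := by
  rcases hl : w.l with _ | ⟨a, t⟩
  · exact absurd hl w.ne
  · have := w.hd; rw [hl] at this; simp at this; simp [this]

lemma concat_form (w : W arc x y) : w.l = w.l.dropLast ++ [y] :=
  (List.dropLast_append_getLast? y (by rw [w.lst]; rfl)).symm

lemma nodup (hA : ∀ v : V, ¬ Relation.TransGen arc v v) (w : W arc x y) : w.l.Nodup :=
  chain'_nodup hA w.ch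

lemma last_notMem_dropLast (hA : ∀ v : V, ¬ Relation.TransGen arc v v) (w : W arc x y) :
    y ∉ w.l.dropLast := by
  intro hmem
  have hnd := w.nodup hA
  rw [w.concat_form] at hnd
  exact ((List.nodup_append'.mp hnd).2.2) hmem (by simp)

def single (arc : V → V → Prop) (x : V) : W arc x x := ⟨[x], by simp, List.isChain_singleton _, rfl, rfl⟩

def ofArc (h : arc x y) : W arc x y := ⟨[x, y], by simp, List.isChain_pair.mpr h, rfl, rfl⟩

@[simp] lemma ofArc_l (h : arc x y) : (ofArc h).l = [x, y] := rfl

lemma two_le (w : W arc x y) (hne : x ≠ y) : 2 ≤ w.l.length := by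
  rcases hl : w.l with _ | ⟨a, t⟩
  · exact absurd hl w.ne
  · rcases t with _ | ⟨b, t'⟩
    · exfalso
      have h1 := w.hd; have h2 := w.lst
      rw [hl] at h1 h2; simp at h1 h2
      exact hne (h1.symm.trans h2)
    · simp

lemma eq_single (hA : ∀ v : V, ¬ Relation.TransGen arc v v) (w : W arc x x) : w.l = [x] := by
  rcases hdl : w.l.dropLast with _ | ⟨a, t⟩
  · rw [w.concat_form, hdl]; rfl
  · exfalso
    apply w.last_notMem_dropLast hA
    rw [hdl]
    have hh : some x = some a := by rw [← w.hd, w.concat_form, hdl]; rfl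
    obtain rfl : x = a := by injection hh
    exact List.mem_cons_self

def comp (w₁ : W arc x y) (w₂ : W arc y z) : W arc x z where
  l := w₁.l ++ w₂.l.tail
  ne := by simp [w₁.ne]
  ch := by
    refine List.isChain_append.mpr ⟨w₁.ch, w₂.ch.tail, ?_⟩
    intro a ha b hb
    rw [w₁.lst] at ha
    simp only [Option.mem_def, Option.some.injEq] at ha
    subst ha
    rcases ht : w₂.l.tail with _ | ⟨d, t'⟩
    · rw [ht] at hb; simp at hb
    · rw [ht] at hb; simp only [List.head?_cons, Option.mem_def, Option.some.injEq] at hb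
      subst hb
      have h2 := w₂.ch
      rw [w₂.cons_form, ht] at h2
      exact (List.isChain_cons_cons.mp h2).1
  hd := by rw [List.head?_append_of_ne_nil _ w₁.ne]; exact w₁.hd
  lst := by
    rcases ht : w₂.l.tail with _ | ⟨d, t'⟩
    · have h1 : w₂.l = [y] := by rw [w₂.cons_form, ht]
      have h2 := w₂.lst
      rw [h1] at h2
      simp only [List.getLast?_singleton, Option.some.injEq] at h2
      subst h2
      simpa using w₁.lst
    · rw [List.getLast?_append_of_ne_nil _ (by simp : d :: t' ≠ [])]
      have h4 : w₂.l = y :: d :: t' := by rw [w₂.cons_form, ht]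
      have h5 := w₂.lst
      rw [h4, List.getLast?_cons_cons] at h5
      exact h5

lemma comp_l (w₁ : W arc x y) (w₂ : W arc y z) : (w₁.comp w₂).l = w₁.l ++ w₂.l.tail := rfl

lemma comp_l' (w₁ : W arc x y) (w₂ : W arc y z) :
    (w₁.comp w₂).l = w₁.l.dropLast ++ w₂.l := by
  rw [comp_l]
  conv_rhs => rw [w₂.cons_form]
  conv_lhs => rw [w₁.concat_form]
  simp

lemma mem_comp {w₁ : W arc x y} {w₂ : W arc y z} {a : V} :
    a ∈ (w₁.comp w₂).l ↔ a ∈ w₁.l ∨ a ∈ w₂.l := by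
  constructor
  · intro h
    rcases List.mem_append.mp h with h | h
    · exact Or.inl h
    · exact Or.inr (List.mem_of_mem_tail h)
  · intro h
    rw [comp_l']
    rcases h with h | h
    · rw [w₁.concat_form] at h
      rcases List.mem_append.mp h with h | h
      · exact List.mem_append_left _ h
      · rcases List.mem_singleton.mp h with rfl
        exact List.mem_append_right _ w₂.headMem
    · exact List.mem_append_right _ h

lemma chain_head_rtg : ∀ {l : List V} {x z : V}, List.Chain' arc l → l.head? = some x →
    z ∈ l → Relation.ReflTransGen arc x z := by
  intro l
  induction l with
  | nil => simp
  | cons a t ih =>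
    intro x z hc hh hz
    simp only [List.head?_cons, Option.some.injEq] at hh
    subst hh
    rcases List.mem_cons.mp hz with rfl | hz
    · exact Relation.ReflTransGen.refl
    · exact (chain'_cons_trans hc hz).to_reflTransGen

lemma chain_last_rtg : ∀ {l : List V} {y z : V}, List.Chain' arc l → l.getLast? = some y →
    z ∈ l → Relation.ReflTransGen arc z y := by
  intro l
  induction l with
  | nil => simp
  | cons a t ih =>
    intro y z hc hl hz
    rcases t with _ | ⟨b, t'⟩
    · simp only [List.mem_singleton] at hz
      simp only [List.getLast?_singleton, Option.some.injEq] at hl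
      subst hz; subst hl
      exact Relation.ReflTransGen.refl
    · rw [List.getLast?_cons_cons] at hl
      rcases List.mem_cons.mp hz with rfl | hz
      · exact Relation.ReflTransGen.head (List.isChain_cons_cons.mp hc).1
          (ih (List.isChain_cons_cons.mp hc).2 hl (by simp))
      · exact ih (List.isChain_cons_cons.mp hc).2 hl hz

lemma mem_init (w : W arc x y) {a : V} (ha : a ∈ w.l) : Relation.ReflTransGen arc x a :=
  chain_head_rtg w.ch w.hd ha

lemma mem_last (w : W arc x y) {a : V} (ha : a ∈ w.l) : Relation.ReflTransGen arc a y :=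
  chain_last_rtg w.ch w.lst ha

lemma rtg (w : W arc x y) : Relation.ReflTransGen arc x y := w.mem_init w.lastMem

lemma head_tg (w : W arc x y) {a : V} (ha : a ∈ w.l) (hne : a ≠ x) :
    Relation.TransGen arc x a := rtg_ne_tg (w.mem_init ha) (Ne.symm hne)

lemma last_tg (w : W arc x y) {a : V} (ha : a ∈ w.l) (hne : a ≠ y) :
    Relation.TransGen arc a y := rtg_ne_tg (w.mem_last ha) hne

lemma split (w : W arc x y) {z : V} (hz : z ∈ w.l) :
    ∃ (w₁ : W arc x z) (w₂ : W arc z y),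
      w.l = w₁.l.dropLast ++ w₂.l ∧ w.l = w₁.l ++ w₂.l.tail := by
  obtain ⟨s, t, heq⟩ := List.append_of_mem hz
  have hne1 : s ++ [z] ≠ [] := by simp
  refine ⟨⟨s ++ [z], hne1, ?_, ?_, List.getLast?_concat⟩,
          ⟨z :: t, by simp, ?_, rfl, ?_⟩, ?_, ?_⟩
  · exact w.ch.prefix ⟨t, by rw [heq]; simp⟩
  · rw [← List.head?_append_of_ne_nil (s ++ [z]) (l₂ := t) hne1, List.append_assoc]
    simp only [List.singleton_append]
    rw [← heq]
    exact w.hd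
  · exact w.ch.suffix ⟨s, heq.symm⟩
  · rw [← w.lst, heq]
    exact (List.getLast?_append_of_ne_nil s (by simp)).symm
  · rw [List.dropLast_concat]; exact heq
  · simp only [List.tail_cons]
    rw [List.append_assoc]
    simpa using heq

lemma concat2 (w : W arc x y) (h2 : 2 ≤ w.l.length) :
    ∃ (c : V) (w' : W arc x c), arc c y ∧ w.l = w'.l ++ [y] := by
  have hdl : w.l.dropLast ≠ [] := by
    intro h
    have := congrArg List.length (w.concat_form)
    rw [h] at this; simp at this; omega
  have hc : w.l.dropLast.getLast? = some (w.l.dropLast.getLast hdl) :=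
    List.getLast?_eq_getLast_of_ne_nil hdl
  refine ⟨w.l.dropLast.getLast hdl, ⟨w.l.dropLast, hdl, ?_, ?_, hc⟩, ?_, w.concat_form⟩
  · exact w.ch.prefix ⟨[y], (w.concat_form).symm⟩
  · rw [← List.head?_append_of_ne_nil w.l.dropLast (l₂ := [y]) hdl, ← w.concat_form]
    exact w.hd
  · have hch := w.ch
    rw [w.concat_form] at hch
    obtain ⟨-, -, hrel⟩ := List.isChain_append.mp hch
    exact hrel _ hc _ rfl

end W

section Ext

lemma ext_aux (hA : ∀ v : V, ¬ Relation.TransGen arc v v) : ∀ (n : ℕ) {r c₁ c₂ : V} (A : W arc r c₁) (B : W arc r c₂),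
    A.l.length ≤ n →
    ∃ (s : V) (A' : W arc s c₁) (B' : W arc s c₂),
      A'.l <:+ A.l ∧ B'.l <:+ B.l ∧
      (∀ x ∈ A'.l, x ∈ B'.l → x = s) ∧
      (∀ x ∈ A.l, x ∈ A'.l ∨ Relation.TransGen arc x s) ∧
      (∀ x ∈ B.l, x ∈ B'.l ∨ Relation.TransGen arc x s) := by
  intro n
  induction n with
  | zero =>
    intro r c₁ c₂ A B hlen
    exfalso
    have := List.length_pos_iff.mpr A.ne
    omega
  | succ n ih =>
    intro r c₁ c₂ A B hlen
    by_cases hbase : ∀ x ∈ A.l, x ∈ B.l → x = r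
    · exact ⟨r, A, B, List.suffix_refl _, List.suffix_refl _, hbase,
        fun x hx => Or.inl hx, fun x hx => Or.inl hx⟩
    · push_neg at hbase
      obtain ⟨y, hyA, hyB, hyr⟩ := hbase
      obtain ⟨A₁, A₂, hAeq', hAeq⟩ := A.split hyA
      obtain ⟨B₁, B₂, hBeq', hBeq⟩ := B.split hyB
      have h2 : 2 ≤ A₁.l.length := A₁.two_le (fun h => hyr h.symm)
      have hlen2 : A₂.l.length ≤ n := by
        have hl := congrArg List.length hAeq'
        rw [List.length_append, List.length_dropLast] at hl
        omega
      obtain ⟨s, A', B', sufA, sufB, hMAX, hSUFA, hSUFB⟩ := ih A₂ B₂ hlen2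
      have hsA' : s ∈ A₂.l := sufA.subset A'.headMem
      have hsB' : s ∈ B₂.l := sufB.subset B'.headMem
      refine ⟨s, A', B', sufA.trans ⟨A₁.l.dropLast, hAeq'.symm⟩,
        sufB.trans ⟨B₁.l.dropLast, hBeq'.symm⟩, hMAX, ?_, ?_⟩
      · intro x hx
        rw [hAeq'] at hx
        rcases List.mem_append.mp hx with hx₁ | hx₂
        · right
          have hney : x ≠ y := by
            rintro rfl
            exact A₁.last_notMem_dropLast hA hx₁
          have h1 : Relation.TransGen arc x y :=
            A₁.last_tg (List.dropLast_subset _ hx₁) hney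
          exact h1.trans_left (A₂.mem_init hsA')
        · exact hSUFA x hx₂
      · intro x hx
        rw [hBeq'] at hx
        rcases List.mem_append.mp hx with hx₁ | hx₂
        · right
          have hney : x ≠ y := by
            rintro rfl
            exact B₁.last_notMem_dropLast hA hx₁
          have h1 : Relation.TransGen arc x y :=
            B₁.last_tg (List.dropLast_subset _ hx₁) hney
          exact h1.trans_left (B₂.mem_init hsB')
        · exact hSUFB x hx₂

end Ext

lemma rtg_toW {x y : V} (h : Relation.ReflTransGen arc x y) : ∃ _w : W arc x y, True := by
  induction h with
  | refl => exact ⟨W.single arc x, trivial⟩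
  | tail h₁ h₂ ih =>
    obtain ⟨w, -⟩ := ih
    exact ⟨w.comp (W.ofArc h₂), trivial⟩

section NetLevel

variable {N : EvoNet V}

lemma concat_chain {s c h : V} (A : W N.arc s c) (hc : N.arc c h) :
    (A.l ++ [h]).Chain' N.arc := by
  refine List.isChain_append.mpr ⟨A.ch, List.isChain_singleton _, ?_⟩
  intro a ha b hb
  rw [A.lst] at ha
  simp only [Option.mem_def, Option.some.injEq, List.head?_cons] at ha hb
  subst ha; subst hb
  exact hc

lemma not_mem_concat_left {s c h : V} (A : W N.arc s c) (hc : N.arc c h) : h ∉ A.l :=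
  fun hm => N.acyclic h (Relation.TransGen.tail' (A.mem_last hm) hc)

lemma mem_interm_concat {s c h : V} (A : W N.arc s c) (hc : N.arc c h) {x : V} :
    x ∈ interm (A.l ++ [h]) ↔ x ∈ A.l ∧ x ≠ s := by
  rw [interm_iff (chain'_nodup N.acyclic (concat_chain A hc))]
  have hhd : (A.l ++ [h]).head? = some s := by
    rw [List.head?_append_of_ne_nil _ A.ne]; exact A.hd
  have hlst : (A.l ++ [h]).getLast? = some h := List.getLast?_concat
  rw [hhd, hlst]
  constructor
  · rintro ⟨hmem, hh, hl⟩
    rcases List.mem_append.mp hmem with hm | hm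
    · exact ⟨hm, fun hxs => hh (by rw [hxs])⟩
    · rcases List.mem_singleton.mp hm with rfl
      exact absurd rfl hl
  · rintro ⟨hmem, hxs⟩
    refine ⟨List.mem_append_left _ hmem, ?_, ?_⟩
    · simp only [ne_eq, Option.some.injEq]
      exact fun h => hxs h.symm
    · simp only [ne_eq, Option.some.injEq]
      rintro rfl
      exact not_mem_concat_left A hc hmem

/-- Build a reticulation cycle from two walks that only share their head. -/
def mkC {s c₁ c₂ h : V} (A : W N.arc s c₁) (B : W N.arc s c₂) (hne : c₁ ≠ c₂)
    (a₁ : N.arc c₁ h) (a₂ : N.arc c₂ h) (hyb : N.IsHybrid h)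
    (hMAX : ∀ x ∈ A.l, x ∈ B.l → x = s) : RetCycle N where
  hend := h
  p := A.l ++ [h]
  q := B.l ++ [h]
  isPath_p := ⟨by simp, concat_chain A a₁⟩
  isPath_q := ⟨by simp, concat_chain B a₂⟩
  len_p := by
    have := List.length_pos_iff.mpr A.ne
    simp only [List.length_append, List.length_singleton]
    omega
  len_q := by
    have := List.length_pos_iff.mpr B.ne
    simp only [List.length_append, List.length_singleton]
    omega
  same_origin := by
    rw [List.head?_append_of_ne_nil _ A.ne, List.head?_append_of_ne_nil _ B.ne, A.hd, B.hd]
  last_p := List.getLast?_concat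
  last_q := List.getLast?_concat
  hybrid := hyb
  intDisjoint := by
    intro x hx hx'
    rw [mem_interm_concat A a₁] at hx
    rw [mem_interm_concat B a₂] at hx'
    exact hx.2 (hMAX x hx.1 hx'.1)
  ne := by
    intro heq
    apply hne
    have h1 : A.l = B.l := by
      have := congrArg List.dropLast heq
      rwa [List.dropLast_concat, List.dropLast_concat] at this
    have h2 := A.lst
    rw [h1, B.lst] at h2
    injection h2 with h3
    exact h3.symm

lemma mkC_hend {s c₁ c₂ h : V} (A : W N.arc s c₁) (B : W N.arc s c₂) (hne : c₁ ≠ c₂)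
    (a₁ : N.arc c₁ h) (a₂ : N.arc c₂ h) (hyb : N.IsHybrid h)
    (hMAX : ∀ x ∈ A.l, x ∈ B.l → x = s) :
    (mkC A B hne a₁ a₂ hyb hMAX).hend = h := rfl

lemma mem_intermNodes_mkC {s c₁ c₂ h : V} {A : W N.arc s c₁} {B : W N.arc s c₂} {hne : c₁ ≠ c₂}
    {a₁ : N.arc c₁ h} {a₂ : N.arc c₂ h} {hyb : N.IsHybrid h}
    {hMAX : ∀ x ∈ A.l, x ∈ B.l → x = s} {x : V} :
    x ∈ (mkC A B hne a₁ a₂ hyb hMAX).intermNodes ↔ (x ∈ A.l ∨ x ∈ B.l) ∧ x ≠ s := by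
  show x ∈ interm (A.l ++ [h]) ∪ interm (B.l ++ [h]) ↔ _
  rw [Set.mem_union, mem_interm_concat A a₁, mem_interm_concat B a₂]
  tauto

lemma arc_p_mkC {s c₁ c₂ h : V} {A : W N.arc s c₁} {B : W N.arc s c₂} {hne : c₁ ≠ c₂}
    {a₁ : N.arc c₁ h} {a₂ : N.arc c₂ h} {hyb : N.IsHybrid h}
    {hMAX : ∀ x ∈ A.l, x ∈ B.l → x = s} :
    (c₁, h) ∈ (mkC A B hne a₁ a₂ hyb hMAX).arcs := by
  left
  have heq : A.l ++ [h] = A.l.dropLast ++ [c₁, h] := by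
    conv_lhs => rw [A.concat_form]
    simp
  exact zip_of_concat2 heq

lemma nodup_p (c : RetCycle N) : c.p.Nodup := chain'_nodup N.acyclic c.isPath_p.2

lemma nodup_q (c : RetCycle N) : c.q.Nodup := chain'_nodup N.acyclic c.isPath_q.2

lemma cycle_walks (c : RetCycle N) :
    ∃ (σ : V) (wp wq : W N.arc σ c.hend), wp.l = c.p ∧ wq.l = c.q ∧ c.p.head? = some σ := by
  have hp := c.isPath_p.1
  have hq := c.isPath_q.1
  refine ⟨c.p.head hp, ⟨c.p, hp, c.isPath_p.2, ?_, c.last_p⟩,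
    ⟨c.q, hq, c.isPath_q.2, ?_, c.last_q⟩, rfl, rfl, ?_⟩
  · exact List.head?_eq_head hp
  · rw [← c.same_origin]
    exact List.head?_eq_head hp
  · exact List.head?_eq_head hp

lemma shareOnly (c : RetCycle N) {x : V} (hp : x ∈ c.p) (hq : x ∈ c.q) :
    c.p.head? = some x ∨ x = c.hend := by
  by_cases hl : x = c.hend
  · exact Or.inr hl
  by_cases hh : c.p.head? = some x
  · exact Or.inl hh
  exfalso
  have hip : x ∈ interm c.p := by
    rw [interm_iff (nodup_p c)]
    refine ⟨hp, fun h => hh h, fun h => hl ?_⟩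
    rw [c.last_p] at h
    injection h with h
    exact h.symm
  have hiq : x ∈ interm c.q := by
    rw [interm_iff (nodup_q c)]
    refine ⟨hq, fun h => hh ?_, fun h => hl ?_⟩
    · rw [c.same_origin]; exact h
    · rw [c.last_q] at h
      injection h with h
      exact h.symm
  exact c.intDisjoint x hip hiq

def RetCycle.swp (c : RetCycle N) : RetCycle N where
  hend := c.hend
  p := c.q
  q := c.p
  isPath_p := c.isPath_q
  isPath_q := c.isPath_p
  len_p := c.len_q
  len_q := c.len_p
  same_origin := c.same_origin.symm
  last_p := c.last_q
  last_q := c.last_p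
  hybrid := c.hybrid
  intDisjoint := fun x hq hp => c.intDisjoint x hp hq
  ne := fun h => c.ne h.symm

lemma swp_hend (c : RetCycle N) : c.swp.hend = c.hend := rfl

lemma swp_intermNodes (c : RetCycle N) : c.swp.intermNodes = c.intermNodes :=
  Set.union_comm _ _

lemma mem_arcs_swp {c : RetCycle N} {e : V × V} : e ∈ c.swp.arcs ↔ e ∈ c.arcs := or_comm

lemma equiv_hend {c₁ c₂ : RetCycle N} (h : c₁.Equiv c₂) : c₁.hend = c₂.hend := by
  rcases h with ⟨hp, -⟩ | ⟨hp, -⟩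
  · have h4 := c₁.last_p
    rw [hp, c₂.last_p] at h4
    injection h4 with h5
    exact h5.symm
  · have h4 := c₁.last_p
    rw [hp, c₂.last_q] at h4
    injection h4 with h5
    exact h5.symm

lemma zip_snd {l : List V} (hn : l.Nodup) {u v : V} (h : (u, v) ∈ l.zip l.tail) :
    v ∈ l ∧ l.head? ≠ some v := by
  obtain ⟨l₁, l₂, rfl⟩ := zip_tail_iff.mp h
  constructor
  · simp
  · intro hh
    rcases l₁ with _ | ⟨a, t⟩
    · simp only [List.nil_append, List.head?_cons, Option.some.injEq] at hh
      subst hh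
      simp at hn
    · simp only [List.cons_append, List.head?_cons, Option.some.injEq] at hh
      subst hh
      rw [List.cons_append, List.nodup_cons] at hn
      exact hn.1 (by simp)

lemma arc_target (c : RetCycle N) {u v : V} (h : (u, v) ∈ c.arcs) :
    N.arc u v ∧ (v ∈ c.intermNodes ∨ v = c.hend) := by
  rcases h with h | h
  · refine ⟨arc_of_zip c.isPath_p.2 h, ?_⟩
    obtain ⟨hv, hhd⟩ := zip_snd (nodup_p c) h
    by_cases hl : v = c.hend
    · exact Or.inr hl
    · refine Or.inl (Or.inl ?_)
      rw [interm_iff (nodup_p c)]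
      refine ⟨hv, hhd, fun hh => hl ?_⟩
      rw [c.last_p] at hh
      injection hh with hh
      exact hh.symm
  · refine ⟨arc_of_zip c.isPath_q.2 h, ?_⟩
    obtain ⟨hv, hhd⟩ := zip_snd (nodup_q c) h
    by_cases hl : v = c.hend
    · exact Or.inr hl
    · refine Or.inl (Or.inr ?_)
      rw [interm_iff (nodup_q c)]
      refine ⟨hv, hhd, fun hh => hl ?_⟩
      rw [c.last_q] at hh
      injection hh with hh
      exact hh.symm

lemma interm_pred {l : List V} (hn : l.Nodup) {x : V} (hx : x ∈ interm l) :
    ∃ u, (u, x) ∈ l.zip l.tail := by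
  rw [interm_iff hn] at hx
  obtain ⟨hmem, hhd, -⟩ := hx
  obtain ⟨l₁, l₂, rfl⟩ := List.append_of_mem hmem
  rcases l₁.eq_nil_or_concat' with rfl | ⟨l₁', u, rfl⟩
  · exact absurd (by simp : ([] ++ x :: l₂).head? = some x) hhd
  · exact ⟨u, zip_tail_iff.mpr ⟨l₁', l₂, by simp⟩⟩

lemma intermNodes_pred (c : RetCycle N) {x : V} (hx : x ∈ c.intermNodes) :
    ∃ u, N.arc u x ∧ (u, x) ∈ c.arcs := by
  rcases hx with hx | hx
  · obtain ⟨u, hu⟩ := interm_pred (nodup_p c) hx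
    exact ⟨u, arc_of_zip c.isPath_p.2 hu, Or.inl hu⟩
  · obtain ⟨u, hu⟩ := interm_pred (nodup_q c) hx
    exact ⟨u, arc_of_zip c.isPath_q.2 hu, Or.inr hu⟩

end NetLevel

lemma diverge : ∀ (n : ℕ) (p p' : List V), p.length ≤ n → p.getLast? = p'.getLast? →
    p ≠ [] → p ≠ p' →
    ∃ S x₁ x₂, p = x₁ ++ S ∧ p' = x₂ ++ S ∧ S ≠ [] ∧
      ((x₁ = [] ∧ x₂ ≠ []) ∨ (x₂ = [] ∧ x₁ ≠ []) ∨
        (x₁ ≠ [] ∧ x₂ ≠ [] ∧ x₁.getLast? ≠ x₂.getLast?)) := by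
  intro n
  induction n with
  | zero =>
    intro p p' hlen _ hpne _
    exfalso
    have := List.length_pos_iff.mpr hpne
    omega
  | succ n ih =>
    intro p p' hlen hlast hpne hne
    obtain ⟨p₀, h, rfl⟩ := p.eq_nil_or_concat'.resolve_left hpne
    have hp' : p' ≠ [] := by
      rintro rfl
      rw [List.getLast?_concat] at hlast
      simp at hlast
    obtain ⟨p₀', h', rfl⟩ := p'.eq_nil_or_concat'.resolve_left hp'
    have hhh : h = h' := by
      rw [List.getLast?_concat, List.getLast?_concat] at hlast
      injection hlast
    subst hhh
    rcases eq_or_ne p₀ [] with rfl | h₀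
    · refine ⟨[h], [], p₀', by simp, by simp, by simp, Or.inl ⟨rfl, ?_⟩⟩
      rintro rfl
      exact hne rfl
    rcases eq_or_ne p₀' [] with rfl | h₀'
    · exact ⟨[h], p₀, [], by simp, by simp, by simp, Or.inr (Or.inl ⟨rfl, h₀⟩)⟩
    rcases eq_or_ne p₀.getLast? p₀'.getLast? with heq | hne2
    · have hne3 : p₀ ≠ p₀' := by
        rintro rfl
        exact hne rfl
      have hlen2 : p₀.length ≤ n := by
        rw [List.length_append] at hlen
        simp at hlen
        omega
      obtain ⟨S, x₁, x₂, e1, e2, hS, hd⟩ := ih p₀ p₀' hlen2 heq h₀ hne3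
      exact ⟨S ++ [h], x₁, x₂, by rw [e1, List.append_assoc],
        by rw [e2, List.append_assoc], by simp, hd⟩
    · exact ⟨[h], p₀, p₀', rfl, rfl, by simp, Or.inr (Or.inr ⟨h₀, h₀', hne2⟩)⟩

section Core

variable {N : EvoNet V}

lemma mem_p_not_interm_q (C : RetCycle N) {y : V} (hyp : y ∈ C.p) : y ∉ interm C.q := by
  intro hyq
  obtain ⟨hm, hh, hl⟩ := (interm_iff (nodup_q C)).mp hyq
  rcases shareOnly C hyp hm with h | h
  · exact hh (by rw [← C.same_origin]; exact h)
  · exact hl (by rw [h]; exact C.last_q)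

lemma other_parent (h2 : N.TwoHybrid) {h u : V} (hyb : N.IsHybrid h) (hu : N.arc u h) :
    ∃ b, b ≠ u ∧ N.arc b h ∧ ∀ z, N.arc z h → z = u ∨ z = b := by
  obtain ⟨a₀, b₀, hne, ha₀, hb₀, hall⟩ := h2 h hyb
  rcases hall u hu with rfl | rfl
  · exact ⟨b₀, fun hh => hne hh.symm, hb₀, hall⟩
  · exact ⟨a₀, hne, ha₀, fun z hz => (hall z hz).symm⟩

/-- Core lemma: in a 1-nested 2-hybrid network, no hybrid node is intermediate
in (the first path of) a reticulation cycle. -/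
lemma no_hybrid_interm_p (h2 : N.TwoHybrid) (hON : N.OneNested)
    (C : RetCycle N) {x : V} (hx : x ∈ interm C.p) (hyb : N.IsHybrid x) : False := by
  have hA := N.acyclic
  obtain ⟨σ, Wp, Wq, hWp, hWq, hhd⟩ := cycle_walks C
  obtain ⟨hxp, hxhd, hxlst⟩ := (interm_iff (nodup_p C)).mp hx
  have hxσ : x ≠ σ := fun h => hxhd (by rw [h]; exact hhd)
  have hxg : x ≠ C.hend := fun h => hxlst (by rw [h]; exact C.last_p)
  obtain ⟨W₁, W₂, hsp1, hsp2⟩ := Wp.split (show x ∈ Wp.l by rw [hWp]; exact hxp)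
  obtain ⟨a, Wa, haarc, hW₁⟩ := W₁.concat2 (W₁.two_le (Ne.symm hxσ))
  obtain ⟨b, hba, hbarc, -⟩ := other_parent h2 hyb haarc
  have hab : a ≠ b := fun h => hba h.symm
  -- memberships into C.p
  have hWaP : ∀ y ∈ Wa.l, y ∈ C.p := by
    intro y hy
    rw [← hWp, hsp2]
    exact List.mem_append_left _ (by rw [hW₁]; exact List.mem_append_left _ hy)
  have hW₂P : ∀ y ∈ W₂.l, y ∈ C.p := by
    intro y hy
    rw [← hWp, hsp1]
    exact List.mem_append_right _ hy
  have hxq : x ∉ C.q := by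
    intro hq
    rcases shareOnly C hxp hq with h | h
    · exact hxhd h
    · exact hxg h
  have hag : a ≠ C.hend := by
    have ht : Relation.TransGen N.arc a C.hend := Relation.TransGen.head' haarc W₂.rtg
    intro h
    rw [h] at ht
    exact hA _ ht
  have hbg : b ≠ C.hend := by
    have ht : Relation.TransGen N.arc b C.hend := Relation.TransGen.head' hbarc W₂.rtg
    intro h
    rw [h] at ht
    exact hA _ ht
  have hσg : σ ≠ C.hend := by
    have ht : Relation.TransGen N.arc σ C.hend :=
      Relation.TransGen.tail' Wa.rtg haarc |>.trans_left W₂.rtg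
    intro h
    rw [h] at ht
    exact hA _ ht
  have hqhd : C.q.head? = some σ := by rw [← C.same_origin]; exact hhd
  obtain ⟨Rw, -⟩ := rtg_toW (N.rooted σ)
  obtain ⟨Rb, -⟩ := rtg_toW (N.rooted b)
  set Ua := Rw.comp Wa with hUa
  obtain ⟨s, A', B', sufA, sufB, hMAX, hSUFA, hSUFB⟩ :=
    ext_aux hA Ua.l.length Ua Rb le_rfl
  by_cases hsa : s = a
  · -- the split node of the extracted cycle is `a` itself, so `a →+ b`.
    subst hsa
    by_cases hz : ∃ z ∈ B'.l, z ≠ s ∧ z ∈ interm C.q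
    · -- case IIb
      obtain ⟨z, hzB, hza, hziq⟩ := hz
      obtain ⟨hzq, hzqhd, hzqlst⟩ := (interm_iff (nodup_q C)).mp hziq
      have hzσ : z ≠ σ := fun h => hzqhd (by rw [h]; exact hqhd)
      have hzg : z ≠ C.hend := fun h => hzqlst (by rw [h]; exact C.last_q)
      obtain ⟨B₁, B₂, hB1, hB2⟩ := B'.split hzB
      obtain ⟨Q₁, Q₂, hQ1, hQ2⟩ := Wq.split (show z ∈ Wq.l by rw [hWq]; exact hzq)
      set Ub := (Rw.comp Q₁).comp B₂ with hUb
      obtain ⟨s₂, A₂, B₂', sufA₂, sufB₂, hMAX₂, hSUF₂A, hSUF₂B⟩ :=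
        ext_aux hA Ua.l.length Ua Ub le_rfl
      have hQ₁q : ∀ y ∈ Q₁.l, y ∈ C.q := by
        intro y hy
        rw [← hWq, hQ2]
        exact List.mem_append_left _ hy
      have SC1 : ∀ y ∈ Wa.l, y ≠ σ → y ∈ Ub.l → False := by
        intro y hyWa hyσ hyUb
        have hσy : Relation.TransGen N.arc σ y := Wa.head_tg hyWa hyσ
        rcases W.mem_comp.mp hyUb with hy1 | hy2
        · rcases W.mem_comp.mp hy1 with hyR | hyQ₁
          · exact no_tr_rt hA hσy (Rw.mem_last hyR)
          · rcases shareOnly C (hWaP y hyWa) (hQ₁q y hyQ₁) with h | h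
            · apply hyσ
              rw [hhd] at h
              injection h with h
              exact h.symm
            · subst h
              exact hA _ ((Relation.TransGen.tail' (Wa.mem_last hyWa) haarc).trans_left W₂.rtg)
        · have hyB' : y ∈ B'.l := by
            rw [hB1]
            exact List.mem_append_right _ hy2
          by_cases hya : y = s
          · subst hya
            have h1 : Relation.ReflTransGen N.arc z y := B₂.mem_init hy2
            exact no_tr_rt hA (B'.head_tg hzB hza) h1
          · exact no_tr_rt hA (B'.head_tg hyB' hya) (Wa.mem_last hyWa)
      have hσUa : σ ∈ Ua.l := W.mem_comp.mpr (Or.inl Rw.lastMem)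
      have hσUb : σ ∈ Ub.l := W.mem_comp.mpr (Or.inl (W.mem_comp.mpr (Or.inl Rw.lastMem)))
      have hs₂σ : s₂ = σ := by
        by_contra hs₂
        have hs₂Ua : s₂ ∈ Ua.l := sufA₂.subset A₂.headMem
        have hs₂Ub : s₂ ∈ Ub.l := sufB₂.subset B₂'.headMem
        rcases W.mem_comp.mp hs₂Ua with hR | hWa'
        · have h1 : Relation.TransGen N.arc s₂ σ := rtg_ne_tg (Rw.mem_last hR) hs₂
          have hσA : σ ∈ A₂.l :=
            (hSUF₂A σ hσUa).resolve_right (fun h => hA _ (h.trans h1))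
          have hσB : σ ∈ B₂'.l :=
            (hSUF₂B σ hσUb).resolve_right (fun h => hA _ (h.trans h1))
          exact hs₂ (hMAX₂ σ hσA hσB).symm
        · exact SC1 s₂ hWa' hs₂ hs₂Ub
      have hzs₂ : z ≠ s₂ := by rw [hs₂σ]; exact hzσ
      have hzB₂' : z ∈ B₂'.l := by
        have hzUb : z ∈ Ub.l := W.mem_comp.mpr (Or.inr B₂.headMem)
        rcases hSUF₂B z hzUb with h | h
        · exact h
        · rw [hs₂σ] at h
          exact absurd (h.trans (Q₁.head_tg Q₁.lastMem hzσ)) (hA z)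
      exact hON (mkC A₂ B₂' hab haarc hbarc hyb hMAX₂) C hxg z
        (mem_intermNodes_mkC.mpr ⟨Or.inr hzB₂', hzs₂⟩) (Or.inr hziq)
    · -- case IIa: build the detour cycle through b
      push_neg at hz
      set X := Wa.comp B' with hX
      set Y := X.comp (W.ofArc hbarc) with hY
      set Pstar := Y.comp W₂ with hPs
      have hxPs : x ∈ Pstar.l :=
        W.mem_comp.mpr (Or.inr W₂.headMem)
      have hbPs : b ∈ Pstar.l :=
        W.mem_comp.mpr (Or.inl (W.mem_comp.mpr (Or.inl (W.mem_comp.mpr (Or.inr B'.lastMem)))))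
      have hbσ : b ≠ σ := by
        intro h
        exact no_tr_rt hA (rtg_ne_tg B'.rtg hab) (h ▸ Wa.rtg)
      let E : RetCycle N := {
        hend := C.hend
        p := Pstar.l
        q := C.q
        isPath_p := ⟨Pstar.ne, Pstar.ch⟩
        isPath_q := C.isPath_q
        len_p := Pstar.two_le hσg
        len_q := C.len_q
        same_origin := by rw [Pstar.hd, hqhd]
        last_p := Pstar.lst
        last_q := C.last_q
        hybrid := C.hybrid
        intDisjoint := by
          intro y hyi hyiq
          obtain ⟨hyP, hyhd, hylst⟩ :=
            (interm_iff (chain'_nodup hA Pstar.ch)).mp hyi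
          rcases W.mem_comp.mp hyP with hyY | hyW₂
          · rcases W.mem_comp.mp hyY with hyX | hybx
            · rcases W.mem_comp.mp hyX with hyWa | hyB'
              · exact mem_p_not_interm_q C (hWaP y hyWa) hyiq
              · by_cases hya : y = s
                · exact mem_p_not_interm_q C (hWaP y (hya ▸ Wa.lastMem)) hyiq
                · exact hz y hyB' hya hyiq
            · rcases List.mem_cons.mp hybx with rfl | hyx
              · exact hz y B'.lastMem hba hyiq
              · rcases List.mem_singleton.mp hyx with rfl
                exact mem_p_not_interm_q C hxp hyiq
          · exact mem_p_not_interm_q C (hW₂P y hyW₂) hyiq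
        ne := fun h => hxq (h ▸ hxPs) }
      have hbE : b ∈ interm E.p := by
        rw [interm_iff (chain'_nodup hA Pstar.ch)]
        refine ⟨hbPs, ?_, ?_⟩
        · rw [Pstar.hd]
          simp only [ne_eq, Option.some.injEq]
          exact fun h => hbσ h.symm
        · rw [Pstar.lst]
          simp only [ne_eq, Option.some.injEq]
          exact fun h => hbg h.symm
      have hbD : b ∈ interm ((mkC A' B' hab haarc hbarc hyb hMAX).q) :=
        (mem_interm_concat B' hbarc).mpr ⟨B'.lastMem, hba⟩
      exact hON E (mkC A' B' hab haarc hbarc hyb hMAX) (fun h => hxg h.symm) b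
        (Or.inl hbE) (Or.inr hbD)
  · by_cases haσ : a = σ
    · -- case III
      subst haσ
      obtain ⟨cp, W₂', hcparc, hW₂⟩ := W₂.concat2 (W₂.two_le hxg)
      obtain ⟨cq, Wq', hcqarc, hWq2⟩ := Wq.concat2 (Wq.two_le hσg)
      have hW₂'P : ∀ y ∈ W₂'.l, y ∈ C.p := fun y hy =>
        hW₂P y (by rw [hW₂]; exact List.mem_append_left _ hy)
      have hWq'Q : ∀ y ∈ Wq'.l, y ∈ C.q := fun y hy => by
        rw [← hWq, hWq2]; exact List.mem_append_left _ hy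
      have hσW₂ : a ∉ W₂.l := fun hm => hA x (Relation.TransGen.tail' (W₂.mem_init hm) haarc)
      have hgW₂' : C.hend ∉ W₂'.l := fun hm =>
        hA _ (Relation.TransGen.tail' (W₂'.mem_last hm) hcparc)
      have hgWq' : C.hend ∉ Wq'.l := fun hm =>
        hA _ (Relation.TransGen.tail' (Wq'.mem_last hm) hcqarc)
      have hcpcq : cp ≠ cq := by
        intro h
        have hcqQ : cq ∈ C.q := hWq'Q cq Wq'.lastMem
        rw [← h] at hcqQ
        rcases shareOnly C (hW₂'P cp W₂'.lastMem) hcqQ with hh | hh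
        · apply hσW₂
          have h6 : cp = a := by rw [hhd] at hh; injection hh with hh6; exact hh6.symm
          rw [← h6, hW₂]
          exact List.mem_append_left _ W₂'.lastMem
        · exact arc_ne hA hcparc hh
      set Ucp := (Rb.comp (W.ofArc hbarc)).comp W₂' with hUcp
      set Ucq := Rw.comp Wq' with hUcq
      obtain ⟨s₁, Acp, Bcq, sufAcp, sufBcq, hMAX₁, hSUF₁A, hSUF₁B⟩ :=
        ext_aux hA Ucp.l.length Ucp Ucq le_rfl
      have hxUcq : x ∉ Ucq.l := by
        intro hm
        rcases W.mem_comp.mp hm with hm | hm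
        · exact hA x (Relation.TransGen.tail' (Rw.mem_last hm) haarc)
        · exact hxq (hWq'Q x hm)
      have hW₂'Ucq : ∀ y ∈ W₂'.l, y ≠ x → y ∈ Ucq.l → False := by
        intro y hy hyx hm
        rcases W.mem_comp.mp hm with hm | hm
        · exact hA x (((W₂'.head_tg hy hyx).trans_left (Rw.mem_last hm)).tail haarc)
        · rcases shareOnly C (hW₂'P y hy) (hWq'Q y hm) with hh | hh
          · apply hσW₂
            have h6 : y = a := by rw [hhd] at hh; injection hh with hh6; exact hh6.symm
            rw [← h6, hW₂]
            exact List.mem_append_left _ hy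
          · exact hgW₂' (hh ▸ hy)
      have hs₁Ucp : s₁ ∈ Ucp.l := sufAcp.subset Acp.headMem
      have hs₁Ucq : s₁ ∈ Ucq.l := sufBcq.subset Bcq.headMem
      have hs₁Rb : s₁ ∈ Rb.l := by
        rcases W.mem_comp.mp hs₁Ucp with hm | hm
        · rcases W.mem_comp.mp hm with hm | hm
          · exact hm
          · rcases List.mem_cons.mp hm with rfl | hm
            · exact Rb.lastMem
            · rcases List.mem_singleton.mp hm with rfl
              exact absurd hs₁Ucq hxUcq
        · by_cases hyx : s₁ = x
          · exact absurd (hyx ▸ hs₁Ucq) hxUcq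
          · exact (hW₂'Ucq s₁ hm hyx hs₁Ucq).elim
      have SUBβ : a ∈ Rb.l → ¬ Relation.TransGen N.arc b s₁ → b ≠ s₁ → False := by
        intro hσRb hnbs₁ hbns₁
        obtain ⟨Rb₁, Rb₂, hRb1, hRb2⟩ := Rb.split hσRb
        have htσb : Relation.TransGen N.arc a b := rtg_ne_tg Rb₂.rtg hab
        obtain ⟨s₄, A₄, B₄, sufA₄, sufB₄, hMAX₄, hSUF₄A, hSUF₄B⟩ :=
          ext_aux hA Rw.l.length Rw (Rw.comp Rb₂) le_rfl
        have hs₄σ : s₄ = a := by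
          by_contra hs₄
          have hs₄Rw : s₄ ∈ Rw.l := sufA₄.subset A₄.headMem
          have h1 : Relation.TransGen N.arc s₄ a := rtg_ne_tg (Rw.mem_last hs₄Rw) hs₄
          have hσA : a ∈ A₄.l := (hSUF₄A a Rw.lastMem).resolve_right (fun h => hA _ (h.trans h1))
          have hσB : a ∈ B₄.l := (hSUF₄B a (W.mem_comp.mpr (Or.inr Rb₂.headMem))).resolve_right
            (fun h => hA _ (h.trans h1))
          exact hs₄ (hMAX₄ a hσA hσB).symm
        have hbB₄ : b ∈ B₄.l := by
          rcases hSUF₄B b (W.mem_comp.mpr (Or.inr Rb₂.lastMem)) with h | h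
          · exact h
          · rw [hs₄σ] at h
            exact absurd (h.trans htσb) (hA b)
        have hbD : b ∈ interm ((mkC A₄ B₄ hab haarc hbarc hyb hMAX₄).q) :=
          (mem_interm_concat B₄ hbarc).mpr ⟨hbB₄, by rw [hs₄σ]; exact hba⟩
        have hbAcp : b ∈ Acp.l := by
          rcases hSUF₁A b (W.mem_comp.mpr (Or.inl (W.mem_comp.mpr (Or.inl Rb.lastMem)))) with h | h
          · exact h
          · exact absurd h hnbs₁
        have hbE : b ∈ interm ((mkC Acp Bcq hcpcq hcparc hcqarc C.hybrid hMAX₁).p) :=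
          (mem_interm_concat Acp hcparc).mpr ⟨hbAcp, hbns₁⟩
        exact hON (mkC A₄ B₄ hab haarc hbarc hyb hMAX₄)
          (mkC Acp Bcq hcpcq hcparc hcqarc C.hybrid hMAX₁) hxg b (Or.inr hbD) (Or.inl hbE)
      by_cases hs₁σ : s₁ = a
      · have hσRb : a ∈ Rb.l := hs₁σ ▸ hs₁Rb
        have htσb : Relation.TransGen N.arc a b := rtg_ne_tg (Rb.mem_last hσRb) hab
        exact SUBβ hσRb (fun h => hA b (by rw [hs₁σ] at h; exact h.trans htσb))
          (fun h => hab (h.trans hs₁σ).symm)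
      · rcases W.mem_comp.mp hs₁Ucq with hs₁Rw | hs₁Wq'
        · -- (α)
          have hts₁σ : Relation.TransGen N.arc s₁ a := rtg_ne_tg (Rw.mem_last hs₁Rw) hs₁σ
          have hσBcq : a ∈ Bcq.l :=
            (hSUF₁B a (W.mem_comp.mpr (Or.inl Rw.lastMem))).resolve_right
              (fun h => hA _ (h.trans hts₁σ))
          have hσE : a ∈ interm ((mkC Acp Bcq hcpcq hcparc hcqarc C.hybrid hMAX₁).q) :=
            (mem_interm_concat Bcq hcqarc).mpr ⟨hσBcq, fun h => hs₁σ h.symm⟩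
          obtain ⟨s₅, A₅, B₅, sufA₅, sufB₅, hMAX₅, hSUF₅A, hSUF₅B⟩ :=
            ext_aux hA Rb.l.length Rb Rw le_rfl
          by_cases hs₅σ : s₅ = a
          · have hσRb : a ∈ Rb.l := sufA₅.subset (hs₅σ ▸ A₅.headMem)
            have hσtb : Relation.TransGen N.arc a b := rtg_ne_tg (Rb.mem_last hσRb) hab
            refine SUBβ hσRb (fun h => hA b (h.trans (hts₁σ.trans hσtb))) (fun h => ?_)
            have h5 := hts₁σ.trans hσtb
            rw [← h] at h5
            exact hA b h5
          · have hσD : a ∈ interm ((mkC A₅ B₅ hba hbarc haarc hyb hMAX₅).q) :=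
              (mem_interm_concat B₅ haarc).mpr ⟨B₅.lastMem, fun h => hs₅σ h.symm⟩
            exact hON (mkC A₅ B₅ hba hbarc haarc hyb hMAX₅)
              (mkC Acp Bcq hcpcq hcparc hcqarc C.hybrid hMAX₁) hxg a (Or.inr hσD) (Or.inr hσE)
        · -- (γ)
          have hs₁q : s₁ ∈ C.q := hWq'Q s₁ hs₁Wq'
          have hs₁g : s₁ ≠ C.hend := fun h => hgWq' (h ▸ hs₁Wq')
          have hs₁iq : s₁ ∈ interm C.q := by
            rw [interm_iff (nodup_q C)]
            refine ⟨hs₁q, fun h => hs₁σ ?_, fun h => hs₁g ?_⟩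
            · rw [hqhd] at h; injection h with h; exact h.symm
            · rw [C.last_q] at h; injection h with h; exact h.symm
          have hσts₁ : Relation.TransGen N.arc a s₁ := Wq'.head_tg hs₁Wq' hs₁σ
          obtain ⟨Rb₁, Rb₂, hRb1, hRb2⟩ := Rb.split hs₁Rb
          obtain ⟨Q₁, Q₂', hQa, hQb⟩ := Wq'.split hs₁Wq'
          obtain ⟨s₅, A₅, B₅, sufA₅, sufB₅, hMAX₅, hSUF₅A, hSUF₅B⟩ :=
            ext_aux hA Rw.l.length Rw ((Rw.comp Q₁).comp Rb₂) le_rfl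
          have hs₅σ : s₅ = a := by
            by_contra hs₅
            have hs₅Rw : s₅ ∈ Rw.l := sufA₅.subset A₅.headMem
            have h1 : Relation.TransGen N.arc s₅ a := rtg_ne_tg (Rw.mem_last hs₅Rw) hs₅
            have hσA : a ∈ A₅.l := (hSUF₅A a Rw.lastMem).resolve_right (fun h => hA _ (h.trans h1))
            have hσB : a ∈ B₅.l :=
              (hSUF₅B a (W.mem_comp.mpr (Or.inl (W.mem_comp.mpr (Or.inr Q₁.headMem))))).resolve_right
                (fun h => hA _ (h.trans h1))
            exact hs₅ (hMAX₅ a hσA hσB).symm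
          have hs₁B₅ : s₁ ∈ B₅.l := by
            rcases hSUF₅B s₁ (W.mem_comp.mpr (Or.inr Rb₂.headMem)) with h | h
            · exact h
            · rw [hs₅σ] at h
              exact absurd (h.trans hσts₁) (hA s₁)
          have hs₁D : s₁ ∈ interm ((mkC A₅ B₅ hab haarc hbarc hyb hMAX₅).q) :=
            (mem_interm_concat B₅ hbarc).mpr ⟨hs₁B₅, by rw [hs₅σ]; exact hs₁σ⟩
          exact hON (mkC A₅ B₅ hab haarc hbarc hyb hMAX₅) C hxg s₁ (Or.inr hs₁D) (Or.inr hs₁iq)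
    · -- case I: direct
      have haA' : a ∈ interm ((mkC A' B' hab haarc hbarc hyb hMAX).p) :=
        (mem_interm_concat A' haarc).mpr ⟨A'.lastMem, fun h => hsa h.symm⟩
      have haC : a ∈ interm C.p := by
        rw [interm_iff (nodup_p C)]
        refine ⟨hWaP a Wa.lastMem, ?_, ?_⟩
        · rw [hhd]
          simp only [ne_eq, Option.some.injEq]
          exact fun h => haσ h.symm
        · rw [C.last_p]
          simp only [ne_eq, Option.some.injEq]
          exact fun h => hag h.symm
      exact hON (mkC A' B' hab haarc hbarc hyb hMAX) C hxg a (Or.inl haA') (Or.inl haC)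

end Core

lemma mem_of_getLast? {l : List V} {a : V} (h : l.getLast? = some a) : a ∈ l := by
  obtain ⟨hh, hx⟩ := List.mem_getLast?_eq_getLast (show a ∈ l.getLast? by rw [h]; rfl)
  have h3 := List.getLast_mem hh
  rwa [← hx] at h3

lemma head_ne_last {l : List V} (hnd : l.Nodup) (hlen : 2 ≤ l.length) {a b : V}
    (hh : l.head? = some a) (hl : l.getLast? = some b) : a ≠ b := by
  rcases l with _ | ⟨x, t⟩
  · simp at hh
  rcases t with _ | ⟨y, ts⟩
  · simp at hlen
  intro hab
  simp only [List.head?_cons, Option.some.injEq] at hh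
  subst hh
  rw [List.getLast?_cons_cons] at hl
  have hbm : b ∈ y :: ts := mem_of_getLast? hl
  rw [List.nodup_cons] at hnd
  exact hnd.1 (by rw [hab]; exact hbm)

lemma W.eq_single' (hA : ∀ v : V, ¬ Relation.TransGen arc v v) {x y : V} (w : W arc x y)
    (hxy : x = y) : w.l = [x] := by
  subst hxy
  exact w.eq_single hA

section Core2

variable {N : EvoNet V}

lemma no_hybrid_interm (h2 : N.TwoHybrid) (hON : N.OneNested) (C : RetCycle N) {x : V}
    (hx : x ∈ C.intermNodes) (hyb : N.IsHybrid x) : False := by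
  rcases hx with hx | hx
  · exact no_hybrid_interm_p h2 hON C hx hyb
  · exact no_hybrid_interm_p h2 hON C.swp hx hyb

lemma intermNodes_ne_hend (c : RetCycle N) {x : V} (hx : x ∈ c.intermNodes) : x ≠ c.hend := by
  rcases hx with hx | hx
  · obtain ⟨-, -, h⟩ := (interm_iff (nodup_p c)).mp hx
    exact fun he => h (by rw [he]; exact c.last_p)
  · obtain ⟨-, -, h⟩ := (interm_iff (nodup_q c)).mp hx
    exact fun he => h (by rw [he]; exact c.last_q)

lemma equiv_swp {c₁ c₂ : RetCycle N} (h : c₁.Equiv c₂.swp) : c₁.Equiv c₂ := h.symm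

lemma penult_data (c : RetCycle N) : ∃ pa pb : V, N.arc pa c.hend ∧ N.arc pb c.hend ∧ pa ≠ pb ∧
    c.p.dropLast.getLast? = some pa ∧ c.q.dropLast.getLast? = some pb := by
  obtain ⟨σ, wp, wq, hWp, hWq, hhd⟩ := cycle_walks c
  obtain ⟨pa, Wpa, h1, hd2⟩ := wp.concat2 (by rw [hWp]; exact c.len_p)
  obtain ⟨pb, Wpb, h3, hd4⟩ := wq.concat2 (by rw [hWq]; exact c.len_q)
  refine ⟨pa, pb, h1, h3, ?_, ?_, ?_⟩
  · intro he
    have hpaP : pa ∈ c.p := by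
      rw [← hWp, hd2]
      exact List.mem_append_left _ Wpa.lastMem
    have hpbQ : pb ∈ c.q := by
      rw [← hWq, hd4]
      exact List.mem_append_left _ Wpb.lastMem
    rw [← he] at hpbQ
    rcases shareOnly c hpaP hpbQ with hx | hx
    · have hpaσ : pa = σ := by rw [hhd] at hx; injection hx with hx; exact hx.symm
      have e1 : Wpa.l = [σ] := Wpa.eq_single' N.acyclic hpaσ.symm
      have e2 : Wpb.l = [σ] := Wpb.eq_single' N.acyclic (hpaσ.symm.trans he)
      apply c.ne
      rw [← hWp, ← hWq, hd2, hd4, e1, e2]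
    · exact arc_ne N.acyclic h1 hx
  · rw [← hWp, hd2, List.dropLast_concat]
    exact Wpa.lst
  · rw [← hWq, hd4, List.dropLast_concat]
    exact Wpb.lst

lemma common_suffix_total (h2 : N.TwoHybrid) (hON : N.OneNested) (c : RetCycle N)
    {l l' : List V} (hl : l = c.p ∨ l = c.q) (hch' : l'.Chain' N.arc) (hnd' : l'.Nodup)
    (hlast : l.getLast? = l'.getLast?) (hne : l ≠ l')
    (hpen : l.dropLast.getLast? = l'.dropLast.getLast?) :
    (∃ x₂, x₂ ≠ [] ∧ l' = x₂ ++ l) ∨ (∃ x₁, x₁ ≠ [] ∧ l = x₁ ++ l') := by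
  have hch : l.Chain' N.arc := by rcases hl with rfl | rfl; exacts [c.isPath_p.2, c.isPath_q.2]
  have hnd : l.Nodup := by rcases hl with rfl | rfl; exacts [nodup_p c, nodup_q c]
  have hlnil : l ≠ [] := by rcases hl with rfl | rfl; exacts [c.isPath_p.1, c.isPath_q.1]
  obtain ⟨S, x₁, x₂, e1, e2, hS, hd⟩ := diverge l.length l l' le_rfl hlast hlnil hne
  rcases hd with ⟨rfl, hx₂⟩ | ⟨rfl, hx₁⟩ | ⟨hx₁, hx₂, hdne⟩
  · left
    rw [List.nil_append] at e1
    exact ⟨x₂, hx₂, by rw [e2, ← e1]⟩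
  · right
    rw [List.nil_append] at e2
    exact ⟨x₁, hx₁, by rw [e1, ← e2]⟩
  · exfalso
    obtain ⟨x₁', r, rfl⟩ := x₁.eq_nil_or_concat'.resolve_left hx₁
    obtain ⟨x₂', r', rfl⟩ := x₂.eq_nil_or_concat'.resolve_left hx₂
    have hrne : r ≠ r' := by
      intro hrr
      apply hdne
      rw [List.getLast?_concat, List.getLast?_concat, hrr]
    have hSc : S.head? = some (S.head hS) := List.head?_eq_head hS
    set t := S.head hS with ht
    have hScons : S = t :: S.tail := (List.cons_head?_tail (by rw [hSc]; rfl)).symm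
    have hch1 := hch
    rw [e1] at hch1
    obtain ⟨-, -, hrel1⟩ := List.isChain_append.mp hch1
    have harc1 : N.arc r t := hrel1 r (by rw [List.getLast?_concat]; rfl) t (by rw [hSc]; rfl)
    have hch2 := hch'
    rw [e2] at hch2
    obtain ⟨-, -, hrel2⟩ := List.isChain_append.mp hch2
    have harc2 : N.arc r' t := hrel2 r' (by rw [List.getLast?_concat]; rfl) t (by rw [hSc]; rfl)
    have htS : t ∈ S := List.mem_of_mem_head? (by rw [hSc]; rfl)
    have hnd1 := hnd
    rw [e1, List.nodup_append'] at hnd1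
    rcases hS2 : S.tail with _ | ⟨d, ts⟩
    · -- |S| = 1 : contradicts the alignment of the second-to-last nodes
      have hS1 : S = [t] := by rw [hScons, hS2]
      apply hrne
      have hp1 : l.dropLast.getLast? = some r := by
        rw [e1, hS1, List.dropLast_concat, List.getLast?_concat]
      have hp2 : l'.dropLast.getLast? = some r' := by
        rw [e2, hS1, List.dropLast_concat, List.getLast?_concat]
      rw [hp1, hp2] at hpen
      injection hpen
    · have hthd : l.head? ≠ some t := by
        intro hx
        rw [e1, List.head?_append_of_ne_nil _ (by simp)] at hx
        exact hnd1.2.2 (List.mem_of_mem_head? (by rw [hx]; rfl)) htS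
      have htlast : l.getLast? ≠ some t := by
        intro hx
        rw [e1, List.getLast?_append_of_ne_nil _ hS] at hx
        rw [hScons, hS2, List.getLast?_cons_cons] at hx
        have htmem : t ∈ S.tail := by rw [hS2]; exact mem_of_getLast? hx
        have hndS := hnd1.2.1
        rw [hScons, List.nodup_cons] at hndS
        exact hndS.1 htmem
      have htl : t ∈ l := by
        rw [e1]
        exact List.mem_append_right _ htS
      have hti : t ∈ interm l := (interm_iff hnd).mpr ⟨htl, hthd, htlast⟩
      have hhyb : N.IsHybrid t := ⟨r, r', hrne, harc1, harc2⟩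
      rcases hl with rfl | rfl
      · exact no_hybrid_interm_p h2 hON c hti hhyb
      · exact no_hybrid_interm_p h2 hON c.swp hti hhyb

lemma suffix_case (h2 : N.TwoHybrid) (hON : N.OneNested) (c c' : RetCycle N)
    (hh : c.hend = c'.hend)
    (hqpen : c.q.dropLast.getLast? = c'.q.dropLast.getLast?)
    {x₂ : List V} (hx₂ : x₂ ≠ []) (he : c'.p = x₂ ++ c.p) : False := by
  have hA := N.acyclic
  obtain ⟨σ, wp, wq, hWp, hWq, hhd⟩ := cycle_walks c
  obtain ⟨σ', wp', wq', hWp', hWq', hhd'⟩ := cycle_walks c'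
  have hσcp : σ ∈ c.p := by rw [← hWp]; exact wp.headMem
  have hσp' : σ ∈ c'.p := by
    rw [he]
    exact List.mem_append_right _ hσcp
  have hσ'x₂ : σ' ∈ x₂ := by
    have h1 := hhd'
    rw [he, List.head?_append_of_ne_nil _ hx₂] at h1
    exact List.mem_of_mem_head? (by rw [h1]; rfl)
  have hσσ' : σ ≠ σ' := by
    intro h
    have hnd := nodup_p c'
    rw [he, List.nodup_append'] at hnd
    exact hnd.2.2 hσ'x₂ (by rw [← h]; exact hσcp)
  have hσg : σ ≠ c.hend := head_ne_last (nodup_p c) c.len_p hhd c.last_p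
  have hσip' : σ ∈ interm c'.p := by
    rw [interm_iff (nodup_p c')]
    refine ⟨hσp', fun h => ?_, fun h => ?_⟩
    · rw [hhd'] at h; injection h with h; exact hσσ' h.symm
    · rw [c'.last_p, ← hh] at h; injection h with h; exact hσg h.symm
  by_cases hq : c.q = c'.q
  · apply hσσ'
    have h1 : c.q.head? = some σ := by rw [← c.same_origin]; exact hhd
    have h2' : c.q.head? = some σ' := by rw [hq, ← c'.same_origin]; exact hhd'
    rw [h1] at h2'
    injection h2'
  · have hlastq : c.q.getLast? = c'.q.getLast? := by rw [c.last_q, c'.last_q, hh]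
    rcases common_suffix_total h2 hON c (Or.inr rfl) c'.isPath_q.2 (nodup_q c') hlastq hq
        hqpen with ⟨y₂, hy₂, heq⟩ | ⟨y₁, hy₁, heq⟩
    · have hσcq : σ ∈ c.q :=
        List.mem_of_mem_head? (show σ ∈ c.q.head? by rw [← c.same_origin, hhd]; rfl)
      have hσiq' : σ ∈ interm c'.q := by
        rw [interm_iff (nodup_q c')]
        refine ⟨by rw [heq]; exact List.mem_append_right _ hσcq, fun h => ?_, fun h => ?_⟩
        · rw [← c'.same_origin, hhd'] at h; injection h with h; exact hσσ' h.symm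
        · rw [c'.last_q, ← hh] at h; injection h with h; exact hσg h.symm
      exact c'.intDisjoint σ hσip' hσiq'
    · have hσ'cq : σ' ∈ c.q := by
        rw [heq]
        exact List.mem_append_right _
          (List.mem_of_mem_head? (show σ' ∈ c'.q.head? by rw [← c'.same_origin, hhd']; rfl))
      have h1 : Relation.TransGen N.arc σ σ' :=
        wq.head_tg (by rw [hWq]; exact hσ'cq) (Ne.symm hσσ')
      have h2' : Relation.TransGen N.arc σ' σ :=
        wp'.head_tg (by rw [hWp']; exact hσp') hσσ'
      exact hA σ (h1.trans h2')

lemma aligned (h2 : N.TwoHybrid) (hON : N.OneNested) (c c' : RetCycle N) (hh : c.hend = c'.hend)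
    (hpa : c.p.dropLast.getLast? = c'.p.dropLast.getLast?)
    (hpb : c.q.dropLast.getLast? = c'.q.dropLast.getLast?) : c.Equiv c' := by
  have hlastp : c.p.getLast? = c'.p.getLast? := by rw [c.last_p, c'.last_p, hh]
  have hlastq : c.q.getLast? = c'.q.getLast? := by rw [c.last_q, c'.last_q, hh]
  have hpp : c.p = c'.p := by
    by_contra hne
    rcases common_suffix_total h2 hON c (Or.inl rfl) c'.isPath_p.2 (nodup_p c') hlastp hne
        hpa with ⟨x₂, hx₂, heq⟩ | ⟨x₁, hx₁, heq⟩
    · exact suffix_case h2 hON c c' hh hpb hx₂ heq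
    · exact suffix_case h2 hON c' c hh.symm hpb.symm hx₁ heq
  have hqq : c.q = c'.q := by
    by_contra hne
    have hheads : c.q.head? = c'.q.head? := by
      rw [← c.same_origin, ← c'.same_origin, hpp]
    rcases common_suffix_total h2 hON c (Or.inr rfl) c'.isPath_q.2 (nodup_q c') hlastq hne
        hpb with ⟨x₂, hx₂, heq⟩ | ⟨x₁, hx₁, heq⟩
    · obtain ⟨σ, hσ⟩ : ∃ σ, c.q.head? = some σ :=
        ⟨c.q.head c.isPath_q.1, List.head?_eq_head _⟩
      have hσx₂ : σ ∈ x₂ := by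
        have h1 : c'.q.head? = some σ := by rw [← hheads]; exact hσ
        rw [heq, List.head?_append_of_ne_nil _ hx₂] at h1
        exact List.mem_of_mem_head? (by rw [h1]; rfl)
      have hσq : σ ∈ c.q := List.mem_of_mem_head? (by rw [hσ]; rfl)
      have hnd := nodup_q c'
      rw [heq, List.nodup_append'] at hnd
      exact hnd.2.2 hσx₂ hσq
    · obtain ⟨σ, hσ⟩ : ∃ σ, c'.q.head? = some σ :=
        ⟨c'.q.head c'.isPath_q.1, List.head?_eq_head _⟩
      have hσx₁ : σ ∈ x₁ := by
        have h1 : c.q.head? = some σ := by rw [hheads]; exact hσ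
        rw [heq, List.head?_append_of_ne_nil _ hx₁] at h1
        exact List.mem_of_mem_head? (by rw [h1]; rfl)
      have hσq : σ ∈ c'.q := List.mem_of_mem_head? (by rw [hσ]; rfl)
      have hnd := nodup_q c
      rw [heq, List.nodup_append'] at hnd
      exact hnd.2.2 hσx₁ hσq
  exact Or.inl ⟨hpp, hqq⟩

lemma unique_cycle (h2 : N.TwoHybrid) (hON : N.OneNested) (c₁ c₂ : RetCycle N)
    (hh : c₁.hend = c₂.hend) : c₁.Equiv c₂ := by
  obtain ⟨pa, pb, ha, hb, hne1, hpa, hpb⟩ := penult_data c₁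
  obtain ⟨pa', pb', ha', hb', hne2, hpa', hpb'⟩ := penult_data c₂
  rw [← hh] at ha' hb'
  obtain ⟨u, w, huw, hu, hw, hall⟩ := h2 c₁.hend c₁.hybrid
  have hmem : ∀ z, N.arc z c₁.hend → z = pa ∨ z = pb := by
    intro z hz
    rcases hall z hz with rfl | rfl
    · rcases hall pa ha with h | h
      · exact Or.inl h.symm
      · rcases hall pb hb with h' | h'
        · exact Or.inr h'.symm
        · exact absurd (h.trans h'.symm) hne1
    · rcases hall pa ha with h | h
      · rcases hall pb hb with h' | h'
        · exact absurd (h.trans h'.symm) hne1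
        · exact Or.inr h'.symm
      · exact Or.inl h.symm
  rcases hmem pa' ha' with h | h
  · have h' : pb' = pb := by
      rcases hmem pb' hb' with h' | h'
      · exact absurd (h'.trans h.symm).symm hne2
      · exact h'
    exact aligned h2 hON c₁ c₂ hh (by rw [hpa, hpa', h]) (by rw [hpb, hpb', h'])
  · have h' : pb' = pa := by
      rcases hmem pb' hb' with h' | h'
      · exact h'
      · exact absurd (h'.trans h.symm).symm hne2
    exact equiv_swp (aligned h2 hON c₁ c₂.swp hh
      (by rw [hpa]; show _ = c₂.q.dropLast.getLast?; rw [hpb', h'])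
      (by rw [hpb]; show _ = c₂.p.dropLast.getLast?; rw [hpa', h]))

end Core2

end EvoNet

theorem twoHybrid_oneNested_iff_weaklyGalled {V : Type*} (N : EvoNet V)
    (h2 : N.TwoHybrid) : N.OneNested ↔ N.WeaklyGalled := by
  constructor
  · intro hON
    intro c₁ c₂ hnequiv
    rw [Set.disjoint_left]
    rintro ⟨u, v⟩ he1 he2
    by_cases hhh : c₁.hend = c₂.hend
    · exact hnequiv (EvoNet.unique_cycle h2 hON c₁ c₂ hhh)
    · obtain ⟨harc1, hv1⟩ := EvoNet.arc_target c₁ he1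
      obtain ⟨-, hv2⟩ := EvoNet.arc_target c₂ he2
      rcases hv1 with hv1 | hv1
      · rcases hv2 with hv2 | hv2
        · exact hON c₁ c₂ hhh v hv1 hv2
        · exact EvoNet.no_hybrid_interm h2 hON c₁ hv1 (hv2 ▸ c₂.hybrid)
      · rcases hv2 with hv2 | hv2
        · exact EvoNet.no_hybrid_interm h2 hON c₂ hv2 (hv1 ▸ c₁.hybrid)
        · exact hhh (hv1.symm.trans hv2)
  · intro hWG
    intro c₁ c₂ hne x hx1 hx2
    obtain ⟨u₁, hu₁, he₁⟩ := EvoNet.intermNodes_pred c₁ hx1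
    obtain ⟨u₂, hu₂, he₂⟩ := EvoNet.intermNodes_pred c₂ hx2
    have hne12 : ¬ c₁.Equiv c₂ := fun h => hne (EvoNet.equiv_hend h)
    have hdisj := hWG c₁ c₂ hne12
    have huu : u₁ ≠ u₂ := by
      rintro rfl
      exact Set.disjoint_left.mp hdisj he₁ he₂
    have hyb : N.IsHybrid x := ⟨u₁, u₂, huu, hu₁, hu₂⟩
    obtain ⟨R₁, -⟩ := EvoNet.rtg_toW (N.rooted u₁)
    obtain ⟨R₂, -⟩ := EvoNet.rtg_toW (N.rooted u₂)
    obtain ⟨s, A', B', sufA, sufB, hMAX, -, -⟩ :=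
      EvoNet.ext_aux N.acyclic R₁.l.length R₁ R₂ le_rfl
    have hne1D : ¬ (EvoNet.mkC A' B' huu hu₁ hu₂ hyb hMAX).Equiv c₁ := by
      intro h
      have hx' := EvoNet.equiv_hend h
      exact EvoNet.intermNodes_ne_hend c₁ hx1 hx'
    have hdisj2 := hWG _ c₁ hne1D
    exact Set.disjoint_left.mp hdisj2 EvoNet.arc_p_mkC he₁
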